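/- Let G be a locally compact group acting measurably on a compact metrizable space M, μ a probability measure on G, and η a μ-stationary probability measure on M. If for every bounded Borel functions f₁,…,f₄ on M one has lim_n (μ^{*n} * η^{⊗4})(f₁ ⊗ f₂ ⊗ f₃ ⊗ f₄) = η(f₁f₂f₃f₄), then η is μ-proximal, i.e. the conditional measures η_ω = lim_n ω₁⋯ω_n η are almost surely point measures. -/

import Mathlib

open MeasureTheory Filter
open scoped ENNReal Topology

/-- The `n`-fold convolution power of a measure on a group (`μ^{*0} = δ_e`). -/
noncomputable def convPow {G : Type*} [Monoid G] [MeasurableSpace G]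
    (μ : Measure G) : ℕ → Measure G
  | 0 => Measure.dirac 1
  | n + 1 => (convPow μ n).mconv μ

private lemma listProd_ofFn_range {G : Type*} [Monoid G] (ω : ℕ → G) :
    ∀ n, ((List.range n).map ω).prod = (List.ofFn fun i : Fin n => ω i).prod
  | 0 => by simp
  | n + 1 => by
    rw [List.range_succ, List.map_append, List.prod_append, listProd_ofFn_range ω n,
      List.ofFn_succ']
    simp

private lemma ofFn_prod_succ {G : Type*} [Monoid G] {n : ℕ} (g : Fin (n + 1) → G) :
    (List.ofFn g).prod = (List.ofFn fun i : Fin n => g i.castSucc).prod * g (Fin.last n) := by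
  rw [List.ofFn_succ']
  simp

private lemma convPow_succ_def {G : Type*} [Monoid G] [MeasurableSpace G] (μ : Measure G)
    (n : ℕ) :
    convPow μ (n + 1) = ((convPow μ n).prod μ).map (fun p : G × G => p.1 * p.2) := by
  rw [convPow]
  rfl

private lemma convPow_mass_eq_one {G : Type*} [Monoid G] [MeasurableSpace G] (μ : Measure G)
    [IsProbabilityMeasure μ]
    (hto : Tendsto (fun n => (convPow μ n Set.univ).toReal) atTop (𝓝 1)) :
    ∀ n, convPow μ n Set.univ = 1 := by
  have h01 : ∀ n, convPow μ n Set.univ = 1 ∨ convPow μ n = 0 := by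
    intro n
    induction n with
    | zero => left; simp [convPow]
    | succ n ih =>
      rcases ih with h | h
      · by_cases hm : AEMeasurable (fun p : G × G => p.1 * p.2) ((convPow μ n).prod μ)
        · left
          haveI : IsProbabilityMeasure (convPow μ n) := ⟨h⟩
          rw [convPow_succ_def, Measure.map_apply_of_aemeasurable hm MeasurableSet.univ,
            Set.preimage_univ]
          exact measure_univ
        · right
          rw [convPow_succ_def]
          exact Measure.map_of_not_aemeasurable hm
      · right
        rw [convPow_succ_def, h, Measure.zero_prod, Measure.map_zero]
  intro n
  rcases h01 n with h | h
  · exact h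
  · exfalso
    have hzero : ∀ m, n ≤ m → convPow μ m = 0 := by
      intro m hm
      induction m, hm using Nat.le_induction with
      | base => exact h
      | succ m _ ih => rw [convPow_succ_def, ih, Measure.zero_prod, Measure.map_zero]
    have h0 : Tendsto (fun m => (convPow μ m Set.univ).toReal) atTop (𝓝 0) := by
      refine Tendsto.congr' ?_ tendsto_const_nhds
      filter_upwards [eventually_ge_atTop n] with m hm
      rw [hzero m hm]
      simp
    exact one_ne_zero (tendsto_nhds_unique hto h0)

private lemma convPow_map_pi {G : Type*} [Monoid G] [MeasurableSpace G] (μ : Measure G)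
    [IsProbabilityMeasure μ] (hmass : ∀ n, convPow μ n Set.univ = 1) (n : ℕ) :
    AEMeasurable (fun g : Fin n → G => (List.ofFn g).prod) (Measure.pi fun _ : Fin n => μ) ∧
      (Measure.pi fun _ : Fin n => μ).map (fun g : Fin n → G => (List.ofFn g).prod)
        = convPow μ n := by
  haveI : ∀ m, IsProbabilityMeasure (convPow μ m) := fun m => ⟨hmass m⟩
  induction n with
  | zero =>
    have he : (fun g : Fin 0 → G => (List.ofFn g).prod) = fun _ => (1 : G) := by
      funext g; simp
    constructor
    · rw [he]; exact aemeasurable_const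
    · rw [he, Measure.map_const, measure_univ, one_smul]
      rfl
  | succ n ih =>
    obtain ⟨ihm, ihmap⟩ := ih
    have hmul : AEMeasurable (fun p : G × G => p.1 * p.2) ((convPow μ n).prod μ) := by
      by_contra hc
      have h0 : convPow μ (n + 1) = 0 := by
        rw [convPow_succ_def]; exact Measure.map_of_not_aemeasurable hc
      have := hmass (n + 1)
      rw [h0] at this
      simp at this
    -- the pair map on (Fin n → G) × G
    set pig : Measure (Fin n → G) := Measure.pi fun _ : Fin n => μ with hpig
    set R : (Fin n → G) × G → G × G := fun p => ((List.ofFn p.1).prod, p.2) with hR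
    obtain ⟨v, hvmeas, hv⟩ := ihm
    have hfstmap : (pig.prod μ).map Prod.fst = pig := by
      rw [Measure.map_fst_prod, measure_univ, one_smul]
    have hcompfst : (fun p : (Fin n → G) × G => (List.ofFn p.1).prod)
        =ᵐ[pig.prod μ] fun p => v p.1 := by
      have := MeasureTheory.ae_eq_comp (μ := pig.prod μ) (f := Prod.fst)
        measurable_fst.aemeasurable (g := fun g : Fin n → G => (List.ofFn g).prod) (g' := v)
        (by rwa [hfstmap])
      exact this
    have hRR' : R =ᵐ[pig.prod μ] Prod.map v id := by
      filter_upwards [hcompfst] with p hp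
      simp [hR, Prod.map, hp]
    have hR'meas : Measurable (Prod.map v (id : G → G)) := hvmeas.prodMap measurable_id
    have hRae : AEMeasurable R (pig.prod μ) := ⟨Prod.map v id, hR'meas, hRR'⟩
    have hRmap : (pig.prod μ).map R = (convPow μ n).prod μ := by
      rw [Measure.map_congr hRR', ← Measure.map_prod_map _ _ hvmeas measurable_id,
        Measure.map_id]
      have : Measure.map v pig = convPow μ n := by
        rw [← Measure.map_congr hv, ihmap]
      rw [this]
    -- Q on pig.prod μ
    set Q : (Fin n → G) × G → G := fun p => (List.ofFn p.1).prod * p.2 with hQ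
    have hQeq : Q = (fun p : G × G => p.1 * p.2) ∘ R := rfl
    have hQae : AEMeasurable Q (pig.prod μ) := by
      rw [hQeq]
      exact AEMeasurable.comp_aemeasurable (by rwa [hRmap]) hRae
    have hQmap : (pig.prod μ).map Q = convPow μ (n + 1) := by
      rw [hQeq, ← AEMeasurable.map_map_of_aemeasurable (by rwa [hRmap]) hRae, hRmap,
        convPow_succ_def]
    -- transport through swap and the succAbove equivalence
    set e := MeasurableEquiv.piFinSuccAbove (fun _ : Fin (n + 1) => G) (Fin.last n) with he
    have hmp := measurePreserving_piFinSuccAbove (fun _ : Fin (n + 1) => μ) (Fin.last n)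
    have hswap : MeasurePreserving Prod.swap (μ.prod pig) (pig.prod μ) :=
      Measure.measurePreserving_swap
    have hdec : (fun g : Fin (n + 1) → G => (List.ofFn g).prod)
        = (Q ∘ Prod.swap) ∘ e := by
      funext g
      have : e g = (g (Fin.last n), fun j : Fin n => g ((Fin.last n).succAbove j)) := rfl
      have hsa : (fun j : Fin n => g ((Fin.last n).succAbove j)) = fun j => g j.castSucc := by
        funext j; rw [Fin.succAbove_last]
      simp only [Function.comp_apply, this, Prod.swap_prod_mk, hQ, hsa]
      rw [ofFn_prod_succ g]
    have hQswapae : AEMeasurable (Q ∘ Prod.swap) (μ.prod pig) := by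
      refine AEMeasurable.comp_measurable ?_ measurable_swap
      rwa [hswap.map_eq]
    constructor
    · rw [hdec]
      refine AEMeasurable.comp_measurable ?_ e.measurable
      rwa [hmp.map_eq]
    · rw [hdec, ← AEMeasurable.map_map_of_aemeasurable (by rwa [hmp.map_eq])
        e.measurable.aemeasurable, hmp.map_eq,
        ← AEMeasurable.map_map_of_aemeasurable (by rwa [hswap.map_eq])
        measurable_swap.aemeasurable, hswap.map_eq, hQmap]

private lemma integrable_of_bdd {M : Type*} [MeasurableSpace M] {ρ : Measure M}
    [IsFiniteMeasure ρ] {φ : M → ℝ} (hm : AEStronglyMeasurable φ ρ) {C : ℝ}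
    (hb : ∀ x, |φ x| ≤ C) : Integrable φ ρ :=
  (integrable_const C).mono' hm (ae_of_all _ fun x => by simpa using hb x)

private lemma var_expand {M : Type*} [MeasurableSpace M] (ρ : Measure M)
    [IsProbabilityMeasure ρ] {φ : M → ℝ} (hm : Measurable φ) {C : ℝ}
    (hb : ∀ x, |φ x| ≤ C) :
    ∫ x, (φ x - ∫ y, φ y ∂ρ) * (φ x - ∫ y, φ y ∂ρ) ∂ρ
      = (∫ x, φ x * φ x ∂ρ) - (∫ x, φ x ∂ρ) * (∫ x, φ x ∂ρ) := by
  set m := ∫ y, φ y ∂ρ with hmdef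
  have hint : Integrable φ ρ := integrable_of_bdd hm.aestronglyMeasurable hb
  have hint2 : Integrable (fun x => φ x * φ x) ρ := by
    refine integrable_of_bdd (hm.mul hm).aestronglyMeasurable (C := C * C) fun x => ?_
    rw [abs_mul]
    exact mul_le_mul (hb x) (hb x) (abs_nonneg _) ((abs_nonneg _).trans (hb x))
  have hre : (fun x => (φ x - m) * (φ x - m))
      = fun x => (φ x * φ x - (2 * m) * φ x) + m * m := by
    funext x; ring
  have hintA : Integrable (fun x => φ x * φ x - 2 * m * φ x) ρ :=
    hint2.sub (hint.const_mul (2 * m))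
  have hintB : Integrable (fun x => 2 * m * φ x) ρ := hint.const_mul (2 * m)
  rw [hre, integral_add hintA (integrable_const (m * m)),
    integral_sub hint2 hintB, integral_const_mul (2 * m) φ, integral_const]
  simp only [measure_univ, probReal_univ, ENNReal.toReal_one, one_smul, smul_eq_mul]
  rw [← hmdef]
  ring

private lemma sq_integral_le {M : Type*} [MeasurableSpace M] (ρ : Measure M)
    [IsProbabilityMeasure ρ] {φ : M → ℝ} (hm : Measurable φ) {C : ℝ}
    (hb : ∀ x, |φ x| ≤ C) :
    (∫ x, φ x ∂ρ) * (∫ x, φ x ∂ρ) ≤ ∫ x, φ x * φ x ∂ρ := by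
  have h0 : (0:ℝ) ≤ ∫ x, (φ x - ∫ y, φ y ∂ρ) * (φ x - ∫ y, φ y ∂ρ) ∂ρ :=
    integral_nonneg fun x => mul_self_nonneg _
  rw [var_expand ρ hm hb] at h0
  linarith
/-- `η` is `μ`-stationary: `μ * η = η`. -/
def Stationary {G M : Type*} [SMul G M] [MeasurableSpace G] [MeasurableSpace M]
    (μ : Measure G) (η : Measure M) : Prop :=
  ∀ s : Set M, MeasurableSet s → (∫⁻ g, η ((g • ·) ⁻¹' s) ∂μ) = η s

theorem stmt8 {G M : Type*} [Group G] [TopologicalSpace G] [IsTopologicalGroup G]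
    [LocallyCompactSpace G] [MeasurableSpace G] [BorelSpace G]
    [TopologicalSpace M] [CompactSpace M] [TopologicalSpace.MetrizableSpace M]
    [MeasurableSpace M] [BorelSpace M]
    [MulAction G M] [MeasurableSMul G M]
    (μ : Measure G) [IsProbabilityMeasure μ]
    (η : Measure M) [IsProbabilityMeasure η] (hstat : Stationary μ η)
    -- the hypothesis on fourfold correlations:
    -- `lim_n (μ^{*n} * η^{⊗4})(f₁ ⊗ f₂ ⊗ f₃ ⊗ f₄) = η(f₁f₂f₃f₄)`
    (hcorr : ∀ f₁ f₂ f₃ f₄ : M → ℝ,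
      Measurable f₁ → Measurable f₂ → Measurable f₃ → Measurable f₄ →
      (∃ C, ∀ x, |f₁ x| ≤ C) → (∃ C, ∀ x, |f₂ x| ≤ C) →
      (∃ C, ∀ x, |f₃ x| ≤ C) → (∃ C, ∀ x, |f₄ x| ≤ C) →
      Tendsto (fun n =>
          ∫ g, (∫ x, f₁ (g • x) ∂η) * (∫ x, f₂ (g • x) ∂η) *
            (∫ x, f₃ (g • x) ∂η) * (∫ x, f₄ (g • x) ∂η) ∂(convPow μ n))
        atTop (𝓝 (∫ x, f₁ x * f₂ x * f₃ x * f₄ x ∂η)))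
    -- `P` is the product measure `μ^{⊗ℕ}` on the path space
    (P : Measure (ℕ → G)) [IsProbabilityMeasure P]
    (hP : ∀ n : ℕ, P.map (fun ω (i : Fin n) => ω (i : ℕ)) =
      Measure.pi (fun _ : Fin n => μ)) :
    -- conclusion: almost surely, the conditional measures (weak* limits of
    -- `ω₁⋯ω_n η`) are point measures
    ∀ᵐ ω ∂P, ∀ κ : Measure M, IsProbabilityMeasure κ →
      (∀ f : C(M, ℝ),
        Tendsto (fun n => ∫ x, f (((List.range n).map ω).prod • x) ∂η)
          atTop (𝓝 (∫ x, f x ∂κ))) →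
      ∃ x : M, κ = Measure.dirac x := by
  classical
  letI : MetricSpace M := TopologicalSpace.metrizableSpaceMetric M
  haveI hne : Nonempty M := by
    rcases isEmpty_or_nonempty M with hM | hM
    · exfalso
      have h1 : η Set.univ = 1 := measure_univ
      rw [(Set.univ_eq_empty_iff.mpr hM : (Set.univ : Set M) = ∅), measure_empty] at h1
      exact zero_ne_one h1
    · exact hM
  obtain ⟨u, hu⟩ := TopologicalSpace.exists_dense_seq M
  -- mass of the convolution powers is 1
  have hone : Tendsto (fun n => (convPow μ n Set.univ).toReal) atTop (𝓝 1) := by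
    have h := hcorr (fun _ => 1) (fun _ => 1) (fun _ => 1) (fun _ => 1)
      measurable_const measurable_const measurable_const measurable_const
      ⟨1, fun _ => by norm_num⟩ ⟨1, fun _ => by norm_num⟩ ⟨1, fun _ => by norm_num⟩
      ⟨1, fun _ => by norm_num⟩
    simpa [integral_const, measure_univ, Measure.real] using h
  have hmass := convPow_mass_eq_one μ hone
  have hkey := convPow_map_pi μ hmass
  haveI hprob : ∀ n, IsProbabilityMeasure (convPow μ n) := fun n => ⟨hmass n⟩
  -- transfer of measure bounds from path space to convolution powers
  have htrans : ∀ (n : ℕ) (s : Set G),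
      P ((fun ω : ℕ → G => (List.ofFn fun i : Fin n => ω (i : ℕ)).prod) ⁻¹' s)
        ≤ convPow μ n s := by
    intro n s
    obtain ⟨hpm, hmap⟩ := hkey n
    have hcm : Measurable fun (ω : ℕ → G) (i : Fin n) => ω (i : ℕ) :=
      measurable_pi_lambda _ fun i => measurable_pi_apply _
    set s' := toMeasurable (convPow μ n) s with hs'
    set B := toMeasurable (Measure.pi fun _ : Fin n => μ)
      ((fun g : Fin n → G => (List.ofFn g).prod) ⁻¹' s') with hB
    have hsub : (fun ω : ℕ → G => (List.ofFn fun i : Fin n => ω (i : ℕ)).prod) ⁻¹' s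
        ⊆ (fun ω : ℕ → G => fun i : Fin n => ω (i : ℕ)) ⁻¹' B := by
      intro ω hω
      apply subset_toMeasurable
      exact subset_toMeasurable _ _ hω
    calc P ((fun ω : ℕ → G => (List.ofFn fun i : Fin n => ω (i : ℕ)).prod) ⁻¹' s)
        ≤ P ((fun ω : ℕ → G => fun i : Fin n => ω (i : ℕ)) ⁻¹' B) := measure_mono hsub
      _ = (P.map (fun (ω : ℕ → G) (i : Fin n) => ω (i : ℕ))) B :=
          (Measure.map_apply hcm (measurableSet_toMeasurable _ _)).symm
      _ = (Measure.pi fun _ : Fin n => μ) B := by rw [hP n]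
      _ = (Measure.pi fun _ : Fin n => μ)
            ((fun g : Fin n → G => (List.ofFn g).prod) ⁻¹' s') := measure_toMeasurable _
      _ = ((Measure.pi fun _ : Fin n => μ).map fun g : Fin n → G => (List.ofFn g).prod) s' :=
          (Measure.map_apply_of_aemeasurable hpm (measurableSet_toMeasurable _ _)).symm
      _ = convPow μ n s' := by rw [hmap]
      _ = convPow μ n s := measure_toMeasurable s
  -- the test functions
  set f : ℕ → M → ℝ := fun k x => 1 + dist (u k) x with hfdef
  have hfc : ∀ k, Continuous (f k) := fun k =>
    continuous_const.add (continuous_const.dist continuous_id)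
  have hf1 : ∀ k x, 1 ≤ f k x := fun k x => by
    simp only [hfdef]
    linarith [dist_nonneg (x := u k) (y := x)]
  have hmeasf : ∀ k, Measurable (f k) := fun k => (hfc k).measurable
  have hbdd : ∀ k, ∃ C, ∀ x, |f k x| ≤ C := by
    intro k
    obtain ⟨z, -, hz⟩ := isCompact_univ.exists_isMaxOn Set.univ_nonempty ((hfc k).continuousOn)
    exact ⟨f k z, fun x => by
      rw [abs_of_nonneg (by linarith [hf1 k x])]
      exact hz (Set.mem_univ x)⟩
  choose C hC using hbdd
  have hC2 : ∀ k x, |f k x * f k x| ≤ C k * C k := fun k x => by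
    rw [abs_mul]
    exact mul_le_mul (hC k x) (hC k x) (abs_nonneg _) ((abs_nonneg _).trans (hC k x))
  have honebd : ∃ C, ∀ x : M, |(1 : ℝ)| ≤ C := ⟨1, fun _ => by norm_num⟩
  set F1 : ℕ → G → ℝ := fun k g => ∫ x, f k (g • x) ∂η with hF1def
  set F2 : ℕ → G → ℝ := fun k g => ∫ x, f k (g • x) * f k (g • x) ∂η with hF2def
  -- limits from the correlation hypothesis
  have ha : ∀ k, Tendsto (fun n => ∫ g, F2 k g ∂convPow μ n)
      atTop (𝓝 (∫ x, f k x * f k x ∂η)) := by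
    intro k
    have h := hcorr (fun x => f k x * f k x) (fun _ => 1) (fun _ => 1) (fun _ => 1)
      ((hmeasf k).mul (hmeasf k)) measurable_const measurable_const measurable_const
      ⟨C k * C k, hC2 k⟩ honebd honebd honebd
    simpa [hF2def, integral_const, measure_univ] using h
  have hb : ∀ k, Tendsto (fun n => ∫ g, F1 k g * F1 k g ∂convPow μ n)
      atTop (𝓝 (∫ x, f k x * f k x ∂η)) := by
    intro k
    have h := hcorr (f k) (f k) (fun _ => 1) (fun _ => 1) (hmeasf k) (hmeasf k)
      measurable_const measurable_const ⟨C k, hC k⟩ ⟨C k, hC k⟩ honebd honebd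
    simpa [hF1def, integral_const, measure_univ] using h
  -- pointwise facts
  have hFmeas : ∀ k (g : G), Measurable fun x : M => f k (g • x) :=
    fun k g => (hmeasf k).comp (measurable_const_smul g)
  have hFbd : ∀ k (g : G) (x : M), |f k (g • x)| ≤ C k := fun k g x => hC k _
  have hF1nn : ∀ k (g : G), 0 ≤ F1 k g := by
    intro k g
    simp only [hF1def]
    exact integral_nonneg fun x => le_trans zero_le_one (hf1 k (g • x))
  have hWnn : ∀ k (g : G), 0 ≤ F2 k g - F1 k g * F1 k g := by
    intro k g
    simp only [hF1def, hF2def]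
    exact sub_nonneg.2 (sq_integral_le η (hFmeas k g) (hFbd k g))
  have hcpos : ∀ k, (0 : ℝ) < ∫ x, f k x * f k x ∂η := by
    intro k
    have hint : Integrable (fun x => f k x * f k x) η :=
      integrable_of_bdd ((hmeasf k).mul (hmeasf k)).aestronglyMeasurable (hC2 k)
    have h1 : (1 : ℝ) ≤ ∫ x, f k x * f k x ∂η := by
      have := integral_mono (integrable_const (1 : ℝ)) hint
        (fun x => by nlinarith [hf1 k x])
      simpa [integral_const, measure_univ] using this
    linarith
  -- the bad sets are null
  have hbadnull : ∀ k j N : ℕ,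
      P {ω : ℕ → G | ∀ n, N ≤ n → ((j : ℝ) + 1)⁻¹ ≤
        F2 k (((List.range n).map ω).prod)
          - F1 k (((List.range n).map ω).prod) * F1 k (((List.range n).map ω).prod)} = 0 := by
    intro k j N
    have hq : (0 : ℝ) < ((j : ℝ) + 1)⁻¹ := by positivity
    have hqne : ENNReal.ofReal (((j : ℝ) + 1)⁻¹) ≠ 0 := (ENNReal.ofReal_pos.mpr hq).ne'
    have hc := hcpos k
    have hdivto : Tendsto (fun n => ENNReal.ofReal
        ((∫ g, F2 k g ∂convPow μ n) - ∫ g, F1 k g * F1 k g ∂convPow μ n)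
          / ENNReal.ofReal (((j : ℝ) + 1)⁻¹)) atTop (𝓝 0) := by
      have hsubto : Tendsto (fun n => (∫ g, F2 k g ∂convPow μ n)
          - ∫ g, F1 k g * F1 k g ∂convPow μ n) atTop (𝓝 0) := by
        have := (ha k).sub (hb k)
        simpa using this
      have h1 := ENNReal.tendsto_ofReal hsubto
      rw [ENNReal.ofReal_zero] at h1
      have h2 := ENNReal.Tendsto.div_const h1 (Or.inr hqne)
      simpa using h2
    have hev : ∀ᶠ n in atTop,
        P {ω : ℕ → G | ∀ n, N ≤ n → ((j : ℝ) + 1)⁻¹ ≤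
          F2 k (((List.range n).map ω).prod)
            - F1 k (((List.range n).map ω).prod) * F1 k (((List.range n).map ω).prod)}
          ≤ ENNReal.ofReal
            ((∫ g, F2 k g ∂convPow μ n) - ∫ g, F1 k g * F1 k g ∂convPow μ n)
              / ENNReal.ofReal (((j : ℝ) + 1)⁻¹) := by
      filter_upwards [(ha k).eventually (eventually_gt_nhds hc),
        (hb k).eventually (eventually_gt_nhds hc), eventually_ge_atTop N] with n h1 h2 h3
      have hintF2 : Integrable (fun g => F2 k g) (convPow μ n) := by
        by_contra hcon
        rw [integral_undef hcon] at h1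
        exact lt_irrefl _ h1
      have hintF11 : Integrable (fun g => F1 k g * F1 k g) (convPow μ n) := by
        by_contra hcon
        rw [integral_undef hcon] at h2
        exact lt_irrefl _ h2
      have hF1ae : AEMeasurable (F1 k) (convPow μ n) := by
        have h11 : AEMeasurable (fun g => F1 k g * F1 k g) (convPow μ n) :=
          hintF11.aestronglyMeasurable.aemeasurable
        have hrw : F1 k = fun g => Real.sqrt (F1 k g * F1 k g) := by
          funext g
          rw [Real.sqrt_mul_self (hF1nn k g)]
        rw [hrw]
        exact Real.continuous_sqrt.measurable.comp_aemeasurable h11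
      have hWae : AEMeasurable (fun g => F2 k g - F1 k g * F1 k g) (convPow μ n) :=
        hintF2.aestronglyMeasurable.aemeasurable.sub (hF1ae.mul hF1ae)
      have hWint : Integrable (fun g => F2 k g - F1 k g * F1 k g) (convPow μ n) :=
        hintF2.sub hintF11
      have hlin : ∫⁻ g, ENNReal.ofReal (F2 k g - F1 k g * F1 k g) ∂convPow μ n
          = ENNReal.ofReal
            ((∫ g, F2 k g ∂convPow μ n) - ∫ g, F1 k g * F1 k g ∂convPow μ n) := by
        rw [← integral_sub hintF2 hintF11]
        exact (ofReal_integral_eq_lintegral_ofReal hWint (ae_of_all _ (hWnn k))).symm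
      have hmark := mul_meas_ge_le_lintegral₀
        (ENNReal.measurable_ofReal.comp_aemeasurable hWae) (ENNReal.ofReal (((j : ℝ) + 1)⁻¹))
      have hset : convPow μ n {g | ((j : ℝ) + 1)⁻¹ ≤ F2 k g - F1 k g * F1 k g}
          ≤ ENNReal.ofReal
            ((∫ g, F2 k g ∂convPow μ n) - ∫ g, F1 k g * F1 k g ∂convPow μ n)
              / ENNReal.ofReal (((j : ℝ) + 1)⁻¹) := by
        have hsub : {g : G | ((j : ℝ) + 1)⁻¹ ≤ F2 k g - F1 k g * F1 k g}
            ⊆ {g : G | ENNReal.ofReal (((j : ℝ) + 1)⁻¹)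
                ≤ ENNReal.ofReal (F2 k g - F1 k g * F1 k g)} :=
          fun g hg => ENNReal.ofReal_le_ofReal hg
        refine (measure_mono hsub).trans ?_
        rw [ENNReal.le_div_iff_mul_le (Or.inl hqne) (Or.inl ENNReal.ofReal_ne_top), mul_comm]
        exact hmark.trans (le_of_eq hlin)
      calc P {ω : ℕ → G | ∀ n, N ≤ n → ((j : ℝ) + 1)⁻¹ ≤
            F2 k (((List.range n).map ω).prod)
              - F1 k (((List.range n).map ω).prod) * F1 k (((List.range n).map ω).prod)}
          ≤ P ((fun ω : ℕ → G => (List.ofFn fun i : Fin n => ω (i : ℕ)).prod) ⁻¹'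
              {g : G | ((j : ℝ) + 1)⁻¹ ≤ F2 k g - F1 k g * F1 k g}) := by
            apply measure_mono
            intro ω hω
            have := hω n h3
            rwa [listProd_ofFn_range ω n] at this
        _ ≤ convPow μ n {g : G | ((j : ℝ) + 1)⁻¹ ≤ F2 k g - F1 k g * F1 k g} := htrans n _
        _ ≤ _ := hset
    exact le_zero_iff.mp (ge_of_tendsto hdivto hev)
  -- conclusion
  rw [ae_iff]
  refine measure_mono_null ?_
    (measure_iUnion_null fun k => measure_iUnion_null fun j =>
      measure_iUnion_null fun N => hbadnull k j N)
  intro ω hω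
  simp only [Set.mem_setOf_eq] at hω
  push_neg at hω
  obtain ⟨κ, hκp, hκtend, hκnd⟩ := hω
  haveI := hκp
  simp only [Set.mem_iUnion]
  by_cases hall : ∀ k, (∫ x, f k x * f k x ∂κ) - (∫ x, f k x ∂κ) * (∫ x, f k x ∂κ) ≤ 0
  · exfalso
    have hVz : ∀ k, (∫ x, f k x * f k x ∂κ) - (∫ x, f k x ∂κ) * (∫ x, f k x ∂κ) = 0 :=
      fun k => le_antisymm (hall k) (sub_nonneg.2 (sq_integral_le κ (hmeasf k) (hC k)))
    have hintf : ∀ k, Integrable (f k) κ :=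
      fun k => integrable_of_bdd (hmeasf k).aestronglyMeasurable (hC k)
    have hae : ∀ k, ∀ᵐ x ∂κ, f k x = ∫ y, f k y ∂κ := by
      intro k
      have h0 : ∫ x, (f k x - ∫ y, f k y ∂κ) * (f k x - ∫ y, f k y ∂κ) ∂κ = 0 := by
        rw [var_expand κ (hmeasf k) (hC k)]
        exact hVz k
      have hint' : Integrable
          (fun x => (f k x - ∫ y, f k y ∂κ) * (f k x - ∫ y, f k y ∂κ)) κ := by
        refine integrable_of_bdd
          ((((hmeasf k).sub measurable_const).mul
            ((hmeasf k).sub measurable_const))).aestronglyMeasurable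
          (C := (C k + |∫ y, f k y ∂κ|) * (C k + |∫ y, f k y ∂κ|)) fun x => ?_
        rw [abs_mul]
        have hx : |f k x - ∫ y, f k y ∂κ| ≤ C k + |∫ y, f k y ∂κ| :=
          (abs_sub _ _).trans (add_le_add (hC k x) le_rfl)
        exact mul_le_mul hx hx (abs_nonneg _) ((abs_nonneg _).trans hx)
      have hz := (integral_eq_zero_iff_of_nonneg (fun x => mul_self_nonneg _) hint').mp h0
      filter_upwards [hz] with x hx
      simp only [Pi.zero_apply] at hx
      exact sub_eq_zero.mp (mul_self_eq_zero.mp hx)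
    have hallae : ∀ᵐ x ∂κ, ∀ k, f k x = ∫ y, f k y ∂κ := ae_all_iff.mpr hae
    have hT0 : κ {x | ¬ ∀ k, f k x = ∫ y, f k y ∂κ} = 0 := by
      rw [← ae_iff.symm] at hallae
      exact ae_iff.mp hallae
    obtain ⟨x₀, hx₀⟩ : ∃ x₀, ∀ k, f k x₀ = ∫ y, f k y ∂κ := by
      by_contra hcon
      push_neg at hcon
      have huniv : {x | ¬ ∀ k, f k x = ∫ y, f k y ∂κ} = Set.univ := by
        apply Set.eq_univ_of_forall
        intro x
        obtain ⟨k, hk⟩ := hcon x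
        exact fun hx => hk (hx k)
      rw [huniv] at hT0
      have hμ : κ Set.univ = 1 := measure_univ
      rw [hT0] at hμ
      exact zero_ne_one hμ
    have hsingle : ∀ y, (∀ k, f k y = ∫ x, f k x ∂κ) → y = x₀ := by
      intro y hy
      by_contra hne
      have hd : 0 < dist y x₀ := dist_pos.mpr hne
      obtain ⟨k, hk⟩ := hu.exists_dist_lt x₀ (half_pos hd)
      have hk' : dist (u k) x₀ < dist y x₀ / 2 := by rwa [dist_comm] at hk
      have h1 : dist (u k) y = (∫ x, f k x ∂κ) - 1 := by
        have := hy k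
        simp only [hfdef] at this
        linarith
      have h2 : dist (u k) x₀ = (∫ x, f k x ∂κ) - 1 := by
        have := hx₀ k
        simp only [hfdef] at this
        linarith
      have htri : dist y x₀ ≤ dist y (u k) + dist (u k) x₀ := dist_triangle _ _ _
      rw [dist_comm y (u k), h1, h2] at htri
      rw [h2] at hk'
      linarith
    have hcompl : κ ({x₀}ᶜ) = 0 := by
      refine measure_mono_null ?_ hT0
      intro y hy
      simp only [Set.mem_compl_iff, Set.mem_singleton_iff] at hy
      exact fun hall' => hy (hsingle y hall')
    refine hκnd x₀ ?_
    refine Measure.ext fun s hs => ?_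
    by_cases hx : x₀ ∈ s
    · rw [Measure.dirac_apply' _ hs, Set.indicator_of_mem hx, Pi.one_apply]
      have hsc : κ sᶜ = 0 := by
        refine measure_mono_null ?_ hcompl
        intro y hy
        simp only [Set.mem_compl_iff, Set.mem_singleton_iff]
        intro h
        rw [h] at hy
        exact hy hx
      exact (prob_compl_eq_zero_iff hs).mp hsc
    · rw [Measure.dirac_apply' _ hs, Set.indicator_of_notMem hx]
      refine measure_mono_null ?_ hcompl
      intro y hy
      simp only [Set.mem_compl_iff, Set.mem_singleton_iff]
      intro h
      rw [h] at hy
      exact hx hy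
  · push_neg at hall
    obtain ⟨k, hk⟩ := hall
    obtain ⟨j, hj⟩ := exists_nat_one_div_lt hk
    have hq : ((j : ℝ) + 1)⁻¹ <
        (∫ x, f k x * f k x ∂κ) - (∫ x, f k x ∂κ) * (∫ x, f k x ∂κ) := by
      rwa [one_div] at hj
    have h1 := hκtend ⟨f k, hfc k⟩
    have h2 := hκtend ⟨fun x => f k x * f k x, (hfc k).mul (hfc k)⟩
    simp only [ContinuousMap.coe_mk] at h1 h2
    have hV : Tendsto (fun n => F2 k (((List.range n).map ω).prod)
        - F1 k (((List.range n).map ω).prod) * F1 k (((List.range n).map ω).prod)) atTop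
        (𝓝 ((∫ x, f k x * f k x ∂κ) - (∫ x, f k x ∂κ) * (∫ x, f k x ∂κ))) := by
      have := h2.sub (h1.mul h1)
      simpa [hF1def, hF2def] using this
    have hev := hV.eventually (eventually_gt_nhds hq)
    rw [eventually_atTop] at hev
    obtain ⟨N, hN⟩ := hev
    exact ⟨k, j, N, fun n hn => (hN n hn).le⟩
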